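/- Let a_1, …, a_6 be nonnegative reals satisfying the E_6 inequalities: 2a_1 ≥ a_2; 2a_2 ≥ a_1 + a_3; 2a_3 ≥ a_2 + a_4 + a_5; 2a_4 ≥ a_3; 2a_5 ≥ a_3 + a_6; 2a_6 ≥ a_5. Then min(2a_1, a_2, 2a_3/3, a_4, a_5, 2a_6) = a_4. -/
import Mathlib

theorem stmt5 (a1 a2 a3 a4 a5 a6 : ℝ)
    (hnn : 0 ≤ a1 ∧ 0 ≤ a2 ∧ 0 ≤ a3 ∧ 0 ≤ a4 ∧ 0 ≤ a5 ∧ 0 ≤ a6)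
    (h1 : 2 * a1 ≥ a2) (h2 : 2 * a2 ≥ a1 + a3) (h3 : 2 * a3 ≥ a2 + a4 + a5)
    (h4 : 2 * a4 ≥ a3) (h5 : 2 * a5 ≥ a3 + a6) (h6 : 2 * a6 ≥ a5) :
    min (2 * a1) (min a2 (min (2 * a3 / 3) (min a4 (min a5 (2 * a6))))) = a4 := by
  obtain ⟨n1, n2, n3, n4, n5, n6⟩ := hnn
  have k5 : a5 ≥ 2 * a3 / 3 := by linarith
  have k2 : a2 ≥ 2 * a3 / 3 := by linarith
  have h43 : a4 ≤ 2 * a3 / 3 := by linarith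
  have h45 : a4 ≤ a5 := by linarith
  have h46 : a4 ≤ 2 * a6 := by linarith
  have h42 : a4 ≤ a2 := by linarith
  have h41 : a4 ≤ 2 * a1 := by linarith
  rw [min_eq_left (le_min h45 h46), min_eq_right h43, min_eq_right h42,
    min_eq_right h41]
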